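/- Let G(z) = exp((log z)·(log log z)) for z ≥ e. For each sufficiently large real k, let x_k be the unique solution of G'(x_k) = k (G is differentiable and convex for large arguments, so x_k exists and is unique for large k). Then log x_k = (log k)/(log log k) + O( (log k)/(log log k)^{3/2} ) as k → ∞. -/

import Mathlib

open Real Set

noncomputable def gfun (u : ℝ) : ℝ := u * (Real.log u - 1) + Real.log (Real.log u + 1)

noncomputable def phi (x : ℝ) : ℝ := Real.exp (gfun (Real.log x))

lemma gfun_mono : StrictMonoOn gfun (Set.Ici (Real.exp 2)) := by
  intro u hu v hv huv
  simp only [Set.mem_Ici] at hu hv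
  have h2 : (1:ℝ) < Real.exp 2 := by
    have := Real.add_one_le_exp (2:ℝ); linarith
  have hu1 : (1:ℝ) < u := lt_of_lt_of_le h2 hu
  have hv1 : (1:ℝ) < v := lt_of_lt_of_le h2 hv
  have hlu : (2:ℝ) ≤ Real.log u := by
    calc (2:ℝ) = Real.log (Real.exp 2) := (Real.log_exp 2).symm
    _ ≤ Real.log u := Real.log_le_log (Real.exp_pos 2) hu
  have hluv : Real.log u < Real.log v := Real.log_lt_log (by linarith) huv
  have h1 : u * (Real.log u - 1) < v * (Real.log v - 1) := by
    have : u * (Real.log u - 1) < v * (Real.log u - 1) := by nlinarith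
    nlinarith
  have h2' : Real.log (Real.log u + 1) ≤ Real.log (Real.log v + 1) :=
    Real.log_le_log (by linarith) (by linarith)
  unfold gfun; linarith

lemma gfun_ge (u : ℝ) (hu : Real.exp 2 ≤ u) : u ≤ gfun u := by
  have hlu : (2:ℝ) ≤ Real.log u := by
    calc (2:ℝ) = Real.log (Real.exp 2) := (Real.log_exp 2).symm
    _ ≤ Real.log u := Real.log_le_log (Real.exp_pos 2) hu
  have hu0 : (0:ℝ) < u := lt_of_lt_of_le (Real.exp_pos 2) hu
  have h2 : (0:ℝ) ≤ Real.log (Real.log u + 1) := Real.log_nonneg (by linarith)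
  unfold gfun; nlinarith


lemma deriv_eq_phi (G : ℝ → ℝ)
    (hG_eq : ∀ z : ℝ, Real.exp 1 ≤ z →
      G z = Real.exp (Real.log z * Real.log (Real.log z)))
    (x : ℝ) (hx : Real.exp 1 < x) : deriv G x = phi x := by
  have hx0 : (0:ℝ) < x := lt_trans (Real.exp_pos 1) hx
  have hlx : (1:ℝ) < Real.log x := by
    calc (1:ℝ) = Real.log (Real.exp 1) := (Real.log_exp 1).symm
    _ < Real.log x := Real.log_lt_log (Real.exp_pos 1) hx
  have hlx0 : Real.log x ≠ 0 := by linarith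
  set F : ℝ → ℝ := fun z => Real.exp (Real.log z * Real.log (Real.log z)) with hF
  have heq : G =ᶠ[nhds x] F :=
    Filter.eventuallyEq_of_mem (isOpen_Ioi.mem_nhds hx) (fun y hy => hG_eq y (le_of_lt hy))
  rw [heq.deriv_eq]
  have h1 : HasDerivAt Real.log x⁻¹ x := Real.hasDerivAt_log (ne_of_gt hx0)
  have h2 : HasDerivAt (fun y => Real.log (Real.log y)) ((Real.log x)⁻¹ * x⁻¹) x :=
    (Real.hasDerivAt_log hlx0).comp x h1
  have h3 : HasDerivAt (fun y => Real.log y * Real.log (Real.log y))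
      (x⁻¹ * Real.log (Real.log x) + Real.log x * ((Real.log x)⁻¹ * x⁻¹)) x := h1.mul h2
  have h4 : HasDerivAt F (Real.exp (Real.log x * Real.log (Real.log x)) *
      (x⁻¹ * Real.log (Real.log x) + Real.log x * ((Real.log x)⁻¹ * x⁻¹))) x := h3.exp
  rw [h4.deriv]
  -- now show RHS = phi x
  have hllx0 : (0:ℝ) < Real.log (Real.log x) + 1 := by
    have : (0:ℝ) ≤ Real.log (Real.log x) := Real.log_nonneg (le_of_lt hlx); linarith
  unfold phi gfun
  rw [Real.exp_add, Real.exp_log hllx0]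
  have e1 : Real.exp (Real.log x * (Real.log (Real.log x) - 1))
      = Real.exp (Real.log x * Real.log (Real.log x)) * x⁻¹ := by
    rw [mul_sub, mul_one, Real.exp_sub, Real.exp_log hx0, div_eq_mul_inv]
  rw [e1]
  field_simp

noncomputable def X0 : ℝ := Real.exp (Real.exp 2)

lemma log_mapsTo : Set.MapsTo Real.log (Set.Ici X0) (Set.Ici (Real.exp 2)) := by
  intro x hx
  simp only [Set.mem_Ici] at *
  calc Real.exp 2 = Real.log X0 := (Real.log_exp _).symm
  _ ≤ Real.log x := Real.log_le_log (Real.exp_pos _) hx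


lemma phi_mono : StrictMonoOn phi (Set.Ici X0) := by
  intro x hx y hy hxy
  have hx0 : (0:ℝ) < x := lt_of_lt_of_le (Real.exp_pos _) hx
  exact Real.exp_lt_exp.mpr (gfun_mono (log_mapsTo hx) (log_mapsTo hy)
    (Real.log_lt_log hx0 hxy))

lemma phi_ge (x : ℝ) (hx : X0 ≤ x) : x ≤ phi x := by
  have hx0 : (0:ℝ) < x := lt_of_lt_of_le (Real.exp_pos _) hx
  calc x = Real.exp (Real.log x) := (Real.exp_log hx0).symm
  _ ≤ phi x := Real.exp_le_exp.mpr (gfun_ge _ (log_mapsTo hx))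

lemma gfun_cont : ContinuousOn gfun (Set.Ici (Real.exp 2)) := by
  have hne : ∀ u ∈ Set.Ici (Real.exp 2), u ≠ 0 := fun u hu =>
    ne_of_gt (lt_of_lt_of_le (Real.exp_pos _) hu)
  have hlog : ContinuousOn Real.log (Set.Ici (Real.exp 2)) :=
    Real.continuousOn_log.mono (fun u hu => hne u hu)
  have hlu2 : ∀ u ∈ Set.Ici (Real.exp 2), (2:ℝ) ≤ Real.log u := by
    intro u hu
    calc (2:ℝ) = Real.log (Real.exp 2) := (Real.log_exp 2).symm
    _ ≤ Real.log u := Real.log_le_log (Real.exp_pos 2) hu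
  apply ContinuousOn.add
  · exact continuousOn_id.mul (hlog.sub continuousOn_const)
  · apply Real.continuousOn_log.comp (hlog.add continuousOn_const)
    intro u hu
    simp only [Set.mem_compl_iff, Set.mem_singleton_iff]
    have := hlu2 u hu; intro h; simp only [Pi.add_apply] at h; linarith

lemma phi_cont : ContinuousOn phi (Set.Ici X0) := by
  have hlog : ContinuousOn Real.log (Set.Ici X0) :=
    Real.continuousOn_log.mono (fun u hu =>
      ne_of_gt (lt_of_lt_of_le (Real.exp_pos _) hu))
  exact Real.continuous_exp.comp_continuousOn (gfun_cont.comp hlog log_mapsTo)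



lemma exp_two_lt_nine : Real.exp 2 < 9 := by
  have h1 : Real.exp 1 < 2.7182818286 := Real.exp_one_lt_d9
  have h2 : Real.exp 2 = Real.exp 1 * Real.exp 1 := by
    rw [← Real.exp_add]; norm_num
  nlinarith [Real.exp_pos 1]

set_option maxHeartbeats 1000000 in
lemma key (L M : ℝ) (hL : Real.exp 2 ≤ L) (hM : Real.exp 6561 ≤ M) (hg : gfun L = M) :
    |L - M / Real.log M| ≤ M / Real.log M ^ ((3:ℝ)/2) := by
  have hM6562 : (6562:ℝ) ≤ M := by
    have := Real.add_one_le_exp (6561:ℝ); linarith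
  have hM0 : (0:ℝ) < M := by linarith
  obtain ⟨T, hT⟩ : ∃ T, Real.log M = T := ⟨_, rfl⟩
  rw [hT]
  have hT6561 : (6561:ℝ) ≤ T := by
    rw [← hT]
    calc (6561:ℝ) = Real.log (Real.exp 6561) := (Real.log_exp _).symm
    _ ≤ Real.log M := Real.log_le_log (Real.exp_pos _) hM
  have hT0 : (0:ℝ) < T := by linarith
  obtain ⟨S, hS⟩ : ∃ S, Real.sqrt T = S := ⟨_, rfl⟩
  have hSS : S * S = T := by rw [← hS]; exact Real.mul_self_sqrt (le_of_lt hT0)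
  have hS81 : (81:ℝ) ≤ S := by rw [← hS]; exact Real.le_sqrt_of_sq_le (by nlinarith)
  have hS0 : (0:ℝ) < S := by linarith
  -- log T ≤ 4 * √S and 2*(log T + 1) ≤ S
  have hQ : (9:ℝ) ≤ Real.sqrt S := Real.le_sqrt_of_sq_le (by nlinarith)
  have hQQ : Real.sqrt S * Real.sqrt S = S := Real.mul_self_sqrt (le_of_lt hS0)
  have hlogT : Real.log T ≤ 4 * Real.sqrt S := by
    have h1 : Real.log (Real.sqrt S) = Real.log T / 4 := by
      rw [← hS, Real.log_sqrt (Real.sqrt_nonneg T), Real.log_sqrt (le_of_lt hT0)]; ring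
    have h2 : Real.log (Real.sqrt S) ≤ Real.sqrt S - 1 :=
      Real.log_le_sub_one_of_pos (by linarith)
    linarith
  have hcond1 : 2 * (Real.log T + 1) ≤ S := by nlinarith
  have hlogT0 : (0:ℝ) ≤ Real.log T := Real.log_nonneg (by linarith)
  have hlogTT : Real.log T ≤ T - 1 := Real.log_le_sub_one_of_pos hT0
  -- T^2 ≤ M
  have hrM : (16:ℝ) ≤ Real.sqrt M := Real.le_sqrt_of_sq_le (by nlinarith)
  have hrrM : (0:ℝ) < Real.sqrt (Real.sqrt M) :=
    Real.sqrt_pos.mpr (by linarith)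
  have hTrM : T ≤ 4 * Real.sqrt (Real.sqrt M) := by
    have h1 : Real.log (Real.sqrt (Real.sqrt M)) = T / 4 := by
      rw [Real.log_sqrt (Real.sqrt_nonneg M), Real.log_sqrt (le_of_lt hM0), hT]; ring
    have h2 : Real.log (Real.sqrt (Real.sqrt M)) ≤ Real.sqrt (Real.sqrt M) - 1 :=
      Real.log_le_sub_one_of_pos hrrM
    linarith
  have hMrr : Real.sqrt (Real.sqrt M) * Real.sqrt (Real.sqrt M) = Real.sqrt M :=
    Real.mul_self_sqrt (Real.sqrt_nonneg M)
  have hMr : Real.sqrt M * Real.sqrt M = M := Real.mul_self_sqrt (le_of_lt hM0)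
  have hT2M : T * T ≤ M := by nlinarith
  -- define a and d
  obtain ⟨a, ha⟩ : ∃ a, M / T = a := ⟨_, rfl⟩
  obtain ⟨d, hd⟩ : ∃ d, M / (T * S) = d := ⟨_, rfl⟩
  rw [ha]
  have haT : a * T = M := by rw [← ha]; field_simp
  have hdTS : d * (T * S) = M := by rw [← hd]; field_simp
  have hdT : d * T = a * S := by
    apply mul_right_cancel₀ (ne_of_gt hS0)
    calc d * T * S = d * (T * S) := by ring
    _ = M := hdTS
    _ = a * T := haT.symm
    _ = a * (S * S) := by rw [hSS]
    _ = a * S * S := by ring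
  have haTle : T ≤ a := by rw [← ha, le_div_iff₀ hT0]; exact hT2M
  have hd0 : (0:ℝ) < d := by rw [← hd]; positivity
  have hda : 2 * d ≤ a := by
    have hdS : d * S = a := by
      apply mul_right_cancel₀ (ne_of_gt hT0)
      calc d * S * T = d * (T * S) := by ring
      _ = M := hdTS
      _ = a * T := haT.symm
    nlinarith
  have hbig : (3280:ℝ) ≤ a - d := by linarith
  have he2 : Real.exp 2 ≤ a - d := by linarith [exp_two_lt_nine]
  have hloga : Real.log a = T - Real.log T := by
    rw [← ha, Real.log_div (ne_of_gt hM0) (ne_of_gt hT0), hT]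
  have had0 : (0:ℝ) < a - d := by linarith
  -- upper bound : L ≤ a + d
  have hupper : L ≤ a + d := by
    by_contra h
    push_neg at h
    have hmem : a + d ∈ Set.Ici (Real.exp 2) := by
      simp only [Set.mem_Ici]; linarith
    have hlt : gfun (a + d) < gfun L := gfun_mono hmem (Set.mem_Ici.mpr hL) h
    rw [hg] at hlt
    have s1 : Real.log a ≤ Real.log (a + d) :=
      Real.log_le_log (by linarith) (by linarith)
    have s2 : (0:ℝ) ≤ Real.log (Real.log (a+d) + 1) := by
      apply Real.log_nonneg
      rw [hloga] at s1; linarith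
    have s3 : (a + d) * (T - Real.log T - 1) ≤ (a + d) * (Real.log (a+d) - 1) := by
      apply mul_le_mul_of_nonneg_left _ (by linarith)
      rw [hloga] at s1; linarith
    have s5 : (a + d) * (Real.log T + 1) ≤ a * S := by
      have h1 : (a + d) * (Real.log T + 1) ≤ (2*a) * (Real.log T + 1) := by
        have hnn : (0:ℝ) ≤ (a - d) * (Real.log T + 1) :=
          mul_nonneg (by linarith) (by linarith)
        nlinarith [hnn]
      have h3 : a * (2*(Real.log T+1)) ≤ a * S :=
        mul_le_mul_of_nonneg_left hcond1 (by linarith)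
      nlinarith
    have hfin : M ≤ gfun (a + d) := by
      unfold gfun
      have expand : (a + d) * (T - Real.log T - 1)
          = a * T + d * T - (a + d) * (Real.log T + 1) := by ring
      rw [haT, hdT] at expand
      linarith
    linarith
  -- lower bound : a - d ≤ L
  have hlower : a - d ≤ L := by
    by_contra h
    push_neg at h
    have hlt : gfun L < gfun (a - d) :=
      gfun_mono (Set.mem_Ici.mpr hL) (Set.mem_Ici.mpr he2) h
    rw [hg] at hlt
    have t1 : Real.log (a - d) ≤ T - Real.log T := by
      rw [← hloga]; exact Real.log_le_log had0 (by linarith)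
    have t15 : (0:ℝ) < Real.log (a - d) + 1 := by
      have h1 : (1:ℝ) ≤ a - d := by linarith
      have := Real.log_nonneg h1; linarith
    have t2 : (a - d) * (Real.log (a-d) - 1) ≤ (a - d) * T := by
      apply mul_le_mul_of_nonneg_left _ (le_of_lt had0)
      linarith
    have t3 : Real.log (Real.log (a-d) + 1) ≤ T := by
      calc Real.log (Real.log (a-d) + 1) ≤ Real.log (T + 1) :=
            Real.log_le_log t15 (by linarith)
      _ ≤ (T + 1) - 1 := Real.log_le_sub_one_of_pos (by linarith)
      _ = T := by ring
    have t4 : T ≤ d * T := by rw [hdT]; nlinarith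
    have hfin : gfun (a - d) ≤ M := by
      unfold gfun
      have expand : (a - d) * T = a * T - d * T := by ring
      rw [haT] at expand
      linarith
    linarith
  -- conclude
  have hpow : M / T ^ ((3:ℝ)/2) = d := by
    rw [show (3:ℝ)/2 = 1 + 1/2 by norm_num, Real.rpow_add hT0, Real.rpow_one,
      ← hd, ← hS, Real.sqrt_eq_rpow]
  rw [hpow, abs_le]
  constructor <;> linarith

/-- Let `G(z) = exp((log z)·(log log z))` for `z ≥ e`. For large `k` the equation
`G'(x_k) = k` has a unique solution among large arguments, and
`log x_k = (log k)/(log log k) + O((log k)/(log log k)^{3/2})`. -/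
theorem critical_point_asymptotics_loglog (G : ℝ → ℝ)
    (hG_eq : ∀ z : ℝ, Real.exp 1 ≤ z →
      G z = Real.exp (Real.log z * Real.log (Real.log z))) :
    ∃ X₀ : ℝ, Real.exp 1 < X₀ ∧ ∃ K C : ℝ, 0 < C ∧ ∀ k : ℝ, K ≤ k →
      (∃! x : ℝ, X₀ ≤ x ∧ deriv G x = k) ∧
      ∀ x : ℝ, X₀ ≤ x → deriv G x = k →
        |Real.log x - Real.log k / Real.log (Real.log k)| ≤
          C * Real.log k / Real.log (Real.log k) ^ ((3 : ℝ) / 2) := by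
  have hX0e : Real.exp 1 < X0 := by
    apply Real.exp_lt_exp.mpr
    have := Real.add_one_le_exp (2:ℝ); linarith
  refine ⟨X0, hX0e, max (phi X0) (Real.exp (Real.exp 6561)), 1, one_pos, fun k hk => ?_⟩
  have hk1 : phi X0 ≤ k := le_trans (le_max_left _ _) hk
  have hk2 : Real.exp (Real.exp 6561) ≤ k := le_trans (le_max_right _ _) hk
  have hk0 : (0:ℝ) < k := lt_of_lt_of_le (Real.exp_pos _) hk2
  have hlogk : Real.exp 6561 ≤ Real.log k := by
    calc Real.exp 6561 = Real.log (Real.exp (Real.exp 6561)) := (Real.log_exp _).symm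
    _ ≤ Real.log k := Real.log_le_log (Real.exp_pos _) hk2
  -- derivative equals phi on Ici X0
  have hderiv : ∀ x : ℝ, X0 ≤ x → deriv G x = phi x := fun x hx =>
    deriv_eq_phi G hG_eq x (lt_of_lt_of_le hX0e hx)
  constructor
  · -- existence and uniqueness
    set b := max X0 k with hb
    have hX0b : X0 ≤ b := le_max_left _ _
    have hsub : Set.Icc X0 b ⊆ Set.Ici X0 := fun y hy => hy.1
    have hIVT := intermediate_value_Icc hX0b (phi_cont.mono hsub)
    have hkmem : k ∈ Set.Icc (phi X0) (phi b) :=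
      ⟨hk1, le_trans (le_max_right _ _) (phi_ge b hX0b)⟩
    obtain ⟨x, hxmem, hphix⟩ := hIVT hkmem
    refine ⟨x, ⟨hxmem.1, by rw [hderiv x hxmem.1]; exact hphix⟩, ?_⟩
    rintro y ⟨hy1, hy2⟩
    rw [hderiv y hy1] at hy2
    exact phi_mono.injOn (Set.mem_Ici.mpr hy1) (Set.mem_Ici.mpr hxmem.1)
      (by rw [hy2, hphix])
  · -- the asymptotic bound
    intro x hx hdx
    rw [hderiv x hx] at hdx
    have hgL : gfun (Real.log x) = Real.log k := by
      rw [← hdx]; unfold phi; rw [Real.log_exp]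
    have hbound := key (Real.log x) (Real.log k) (log_mapsTo hx) hlogk hgL
    rw [one_mul]
    exact hbound
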